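/- Every shortened array code with modulus q, column-weight r ≥ 2, girth at least ten, and s ≥ 1 retained block-columns in its parity-check matrix satisfies s ≤ ( q + r(2r−3) + √( (q + r(2r−3))² − 4r(r−1)³ ) ) / ( 2r(r−1) ). -/

import Mathlib

/-- The Tanner graph of a (possibly shortened) array code with modulus `q`,
block-row labels `a 0, …, a (r-1)` (elements of `ZMod q`), and retained
block-column label set `S ⊆ ZMod q`.  Row vertices are pairs `(i, x)`
(block-row `i`, row `x` within the block); column vertices are pairs `(j, y)`
with `j ∈ S` (block-column labeled `j`, column `y` within the block).
A row `(i, x)` is adjacent to a column `(j, y)` iff the corresponding entry of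
the parity-check matrix, i.e. entry `(x, y)` of `P ^ (a i * j)`, equals `1`,
which happens iff `y = x + a i * j`. -/
def tannerGraph (q r : ℕ) (a : Fin r → ZMod q) (S : Finset (ZMod q)) :
    SimpleGraph ((Fin r × ZMod q) ⊕ ({j // j ∈ S} × ZMod q)) where
  Adj u v :=
    match u, v with
    | Sum.inl (i, x), Sum.inr (j, y) => y = x + a i * (j : ZMod q)
    | Sum.inr (j, y), Sum.inl (i, x) => y = x + a i * (j : ZMod q)
    | _, _ => False
  symm := by
    constructor
    rintro (⟨i, x⟩ | ⟨j, y⟩) (⟨i', x'⟩ | ⟨j', y'⟩) h <;> simp_all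
  loopless := by
    constructor
    rintro (⟨i, x⟩ | ⟨j, y⟩) h <;> simp_all

open SimpleGraph

lemma my_egirth_le_six {V : Type*} (G : SimpleGraph V) (v0 v1 v2 v3 v4 v5 : V)
    (h01 : G.Adj v0 v1) (h12 : G.Adj v1 v2) (h23 : G.Adj v2 v3)
    (h34 : G.Adj v3 v4) (h45 : G.Adj v4 v5) (h50 : G.Adj v5 v0)
    (hnd : [v0, v1, v2, v3, v4, v5].Nodup) : G.egirth ≤ 6 := by
  classical
  let w : G.Walk v0 v0 :=
    Walk.cons h01 (Walk.cons h12 (Walk.cons h23 (Walk.cons h34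
      (Walk.cons h45 (Walk.cons h50 Walk.nil)))))
  have hc : w.IsCycle := by
    simp only [List.nodup_cons, List.mem_cons, List.not_mem_nil, or_false,
      List.mem_singleton, List.nodup_nil, and_true] at hnd
    rw [Walk.isCycle_def, Walk.isTrail_def]
    refine ⟨?_, by simp [w], ?_⟩
    · simp only [w, Walk.edges_cons, Walk.edges_nil, List.nodup_cons, List.mem_cons,
        List.not_mem_nil, or_false, Sym2.eq, Sym2.rel_iff', Prod.mk.injEq, Prod.swap_prod_mk,
        List.not_mem_nil, List.nodup_nil, and_true, List.mem_singleton]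
      push_neg
      tauto
    · simp only [w, Walk.support_cons, Walk.support_nil, List.tail_cons, List.nodup_cons,
        List.mem_cons, List.not_mem_nil, or_false, List.mem_singleton, List.nodup_nil, and_true]
      push_neg
      tauto
  calc G.egirth ≤ w.length := by
        rw [SimpleGraph.egirth]
        exact iInf₂_le_of_le v0 w (iInf_le_of_le hc le_rfl)
    _ = 6 := by simp [w]


set_option maxHeartbeats 2000000 in
lemma my_egirth_le_eight {V : Type*} (G : SimpleGraph V) (v0 v1 v2 v3 v4 v5 v6 v7 : V)
    (h01 : G.Adj v0 v1) (h12 : G.Adj v1 v2) (h23 : G.Adj v2 v3)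
    (h34 : G.Adj v3 v4) (h45 : G.Adj v4 v5) (h56 : G.Adj v5 v6)
    (h67 : G.Adj v6 v7) (h70 : G.Adj v7 v0)
    (hnd : [v0, v1, v2, v3, v4, v5, v6, v7].Nodup) : G.egirth ≤ 8 := by
  classical
  let w : G.Walk v0 v0 :=
    Walk.cons h01 (Walk.cons h12 (Walk.cons h23 (Walk.cons h34
      (Walk.cons h45 (Walk.cons h56 (Walk.cons h67 (Walk.cons h70 Walk.nil)))))))
  have hc : w.IsCycle := by
    simp only [List.nodup_cons, List.mem_cons, List.not_mem_nil, or_false,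
      List.mem_singleton, List.nodup_nil, and_true, not_or] at hnd
    obtain ⟨⟨n01,n02,n03,n04,n05,n06,n07⟩,⟨n12,n13,n14,n15,n16,n17⟩,⟨n23,n24,n25,n26,n27⟩,
      ⟨n34,n35,n36,n37⟩,⟨n45,n46,n47⟩,⟨n56,n57⟩,n67,-⟩ := hnd
    have m01 : ¬ (v1 = v0) := fun h => n01 h.symm
    have m02 : ¬ (v2 = v0) := fun h => n02 h.symm
    have m03 : ¬ (v3 = v0) := fun h => n03 h.symm
    have m04 : ¬ (v4 = v0) := fun h => n04 h.symm
    have m05 : ¬ (v5 = v0) := fun h => n05 h.symm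
    have m06 : ¬ (v6 = v0) := fun h => n06 h.symm
    have m07 : ¬ (v7 = v0) := fun h => n07 h.symm
    have m12 : ¬ (v2 = v1) := fun h => n12 h.symm
    have m13 : ¬ (v3 = v1) := fun h => n13 h.symm
    have m14 : ¬ (v4 = v1) := fun h => n14 h.symm
    have m15 : ¬ (v5 = v1) := fun h => n15 h.symm
    have m16 : ¬ (v6 = v1) := fun h => n16 h.symm
    have m17 : ¬ (v7 = v1) := fun h => n17 h.symm
    have m23 : ¬ (v3 = v2) := fun h => n23 h.symm
    have m24 : ¬ (v4 = v2) := fun h => n24 h.symm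
    have m25 : ¬ (v5 = v2) := fun h => n25 h.symm
    have m26 : ¬ (v6 = v2) := fun h => n26 h.symm
    have m27 : ¬ (v7 = v2) := fun h => n27 h.symm
    have m34 : ¬ (v4 = v3) := fun h => n34 h.symm
    have m35 : ¬ (v5 = v3) := fun h => n35 h.symm
    have m36 : ¬ (v6 = v3) := fun h => n36 h.symm
    have m37 : ¬ (v7 = v3) := fun h => n37 h.symm
    have m45 : ¬ (v5 = v4) := fun h => n45 h.symm
    have m46 : ¬ (v6 = v4) := fun h => n46 h.symm
    have m47 : ¬ (v7 = v4) := fun h => n47 h.symm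
    have m56 : ¬ (v6 = v5) := fun h => n56 h.symm
    have m57 : ¬ (v7 = v5) := fun h => n57 h.symm
    have m67 : ¬ (v7 = v6) := fun h => n67 h.symm
    rw [Walk.isCycle_def, Walk.isTrail_def]
    refine ⟨?_, by simp [w], ?_⟩
    · simp [w, Sym2.eq, Sym2.rel_iff', Prod.mk.injEq, Prod.swap_prod_mk,
        n01,n02,n03,n04,n05,n06,n07,n12,n13,n14,n15,n16,n17,n23,n24,n25,n26,n27,
        n34,n35,n36,n37,n45,n46,n47,n56,n57,n67,
        m01,m02,m03,m04,m05,m06,m07,m12,m13,m14,m15,m16,m17,m23,m24,m25,m26,m27,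
        m34,m35,m36,m37,m45,m46,m47,m56,m57,m67]
    · simp [w, n01,n02,n03,n04,n05,n06,n07,n12,n13,n14,n15,n16,n17,n23,n24,n25,n26,n27,
        n34,n35,n36,n37,n45,n46,n47,n56,n57,n67,
        m01,m02,m03,m04,m05,m06,m07,m12,m13,m14,m15,m16,m17,m23,m24,m25,m26,m27,
        m34,m35,m36,m37,m45,m46,m47,m56,m57,m67]
  calc G.egirth ≤ w.length := by
        rw [SimpleGraph.egirth]
        exact iInf₂_le_of_le v0 w (iInf_le_of_le hc le_rfl)
    _ = 8 := by simp [w]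


lemma no_six {q r : ℕ} {a : Fin r → ZMod q} {S : Finset (ZMod q)}
    (hg : 10 ≤ (tannerGraph q r a S).egirth)
    {i1 i2 i3 : Fin r} (hi12 : i1 ≠ i2) (hi23 : i2 ≠ i3) (hi13 : i1 ≠ i3)
    {j1 j2 j3 : {j // j ∈ S}} (hj12 : j1 ≠ j2) (hj23 : j2 ≠ j3) (hj13 : j1 ≠ j3)
    (heq : a i1 * ((j2 : ZMod q) - (j1 : ZMod q)) + a i2 * ((j3 : ZMod q) - (j2 : ZMod q))
      + a i3 * ((j1 : ZMod q) - (j3 : ZMod q)) = 0) : False := by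
  set G := tannerGraph q r a S
  have h6 : G.egirth ≤ 6 := by
    refine my_egirth_le_six G
      (Sum.inr (j1, 0))
      (Sum.inl (i1, -(a i1 * (j1 : ZMod q))))
      (Sum.inr (j2, a i1 * ((j2 : ZMod q) - (j1 : ZMod q))))
      (Sum.inl (i2, a i1 * ((j2 : ZMod q) - (j1 : ZMod q)) - a i2 * (j2 : ZMod q)))
      (Sum.inr (j3, a i1 * ((j2 : ZMod q) - (j1 : ZMod q)) + a i2 * ((j3 : ZMod q) - (j2 : ZMod q))))
      (Sum.inl (i3, a i1 * ((j2 : ZMod q) - (j1 : ZMod q)) + a i2 * ((j3 : ZMod q) - (j2 : ZMod q))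
        - a i3 * (j3 : ZMod q)))
      ?_ ?_ ?_ ?_ ?_ ?_ ?_
    · show (0 : ZMod q) = _ + _; ring
    · show a i1 * ((j2 : ZMod q) - (j1 : ZMod q)) = _ + _; ring
    · show a i1 * ((j2 : ZMod q) - (j1 : ZMod q)) = _ + _; ring
    · show _ = _ + _; ring
    · show _ = _ + _; ring
    · show (0 : ZMod q) = _ + _; linear_combination -heq
    · simp [List.nodup_cons, hj12, hj23, hj13, hi12, hi23, hi13,
        hj12.symm, hj23.symm, hj13.symm, hi12.symm, hi23.symm, hi13.symm, Subtype.ext_iff]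
  exact absurd (le_trans hg h6) (by norm_num)


lemma no_eight {q r : ℕ} {a : Fin r → ZMod q} {S : Finset (ZMod q)}
    (hg : 10 ≤ (tannerGraph q r a S).egirth)
    {i1 i2 i3 i4 : Fin r} {j1 j2 j3 j4 : {j // j ∈ S}}
    (hi12 : i1 ≠ i2) (hi23 : i2 ≠ i3) (hi34 : i3 ≠ i4) (hi14 : i1 ≠ i4)
    (hj12 : j1 ≠ j2) (hj23 : j2 ≠ j3) (hj34 : j3 ≠ j4) (hj14 : j1 ≠ j4)
    (hc13 : j1 = j3 → (0 : ZMod q) ≠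
      a i1 * ((j2 : ZMod q) - (j1 : ZMod q)) + a i2 * ((j3 : ZMod q) - (j2 : ZMod q)))
    (hc24 : j2 = j4 → a i1 * ((j2 : ZMod q) - (j1 : ZMod q)) ≠
      a i1 * ((j2 : ZMod q) - (j1 : ZMod q)) + a i2 * ((j3 : ZMod q) - (j2 : ZMod q))
        + a i3 * ((j4 : ZMod q) - (j3 : ZMod q)))
    (hr13 : i1 = i3 → -(a i1 * (j1 : ZMod q)) ≠
      a i1 * ((j2 : ZMod q) - (j1 : ZMod q)) + a i2 * ((j3 : ZMod q) - (j2 : ZMod q))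
        - a i3 * (j3 : ZMod q))
    (hr24 : i2 = i4 → a i1 * ((j2 : ZMod q) - (j1 : ZMod q)) - a i2 * (j2 : ZMod q) ≠
      a i1 * ((j2 : ZMod q) - (j1 : ZMod q)) + a i2 * ((j3 : ZMod q) - (j2 : ZMod q))
        + a i3 * ((j4 : ZMod q) - (j3 : ZMod q)) - a i4 * (j4 : ZMod q))
    (heq : a i1 * ((j2 : ZMod q) - (j1 : ZMod q)) + a i2 * ((j3 : ZMod q) - (j2 : ZMod q))
      + a i3 * ((j4 : ZMod q) - (j3 : ZMod q)) + a i4 * ((j1 : ZMod q) - (j4 : ZMod q)) = 0) :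
    False := by
  set G := tannerGraph q r a S
  set y2 : ZMod q := a i1 * ((j2 : ZMod q) - (j1 : ZMod q)) with hy2
  set y3 : ZMod q := y2 + a i2 * ((j3 : ZMod q) - (j2 : ZMod q)) with hy3
  set y4 : ZMod q := y3 + a i3 * ((j4 : ZMod q) - (j3 : ZMod q)) with hy4
  have h8 : G.egirth ≤ 8 := by
    have hv13 : (Sum.inr (j1, (0:ZMod q)) : (Fin r × ZMod q) ⊕ ({j // j ∈ S} × ZMod q))
        ≠ Sum.inr (j3, y3) := by
      intro h; rw [Sum.inr.injEq, Prod.mk.injEq] at h; exact hc13 h.1 h.2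
    have hv24 : (Sum.inr (j2, y2) : (Fin r × ZMod q) ⊕ ({j // j ∈ S} × ZMod q))
        ≠ Sum.inr (j4, y4) := by
      intro h; rw [Sum.inr.injEq, Prod.mk.injEq] at h; exact hc24 h.1 h.2
    have hw13 : (Sum.inl (i1, -(a i1 * (j1 : ZMod q))) : (Fin r × ZMod q) ⊕ ({j // j ∈ S} × ZMod q))
        ≠ Sum.inl (i3, y3 - a i3 * (j3 : ZMod q)) := by
      intro h; rw [Sum.inl.injEq, Prod.mk.injEq] at h; exact hr13 h.1 h.2
    have hw24 : (Sum.inl (i2, y2 - a i2 * (j2 : ZMod q)) : (Fin r × ZMod q) ⊕ ({j // j ∈ S} × ZMod q))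
        ≠ Sum.inl (i4, y4 - a i4 * (j4 : ZMod q)) := by
      intro h; rw [Sum.inl.injEq, Prod.mk.injEq] at h; exact hr24 h.1 h.2
    refine my_egirth_le_eight G
      (Sum.inr (j1, 0))
      (Sum.inl (i1, -(a i1 * (j1 : ZMod q))))
      (Sum.inr (j2, y2))
      (Sum.inl (i2, y2 - a i2 * (j2 : ZMod q)))
      (Sum.inr (j3, y3))
      (Sum.inl (i3, y3 - a i3 * (j3 : ZMod q)))
      (Sum.inr (j4, y4))
      (Sum.inl (i4, y4 - a i4 * (j4 : ZMod q)))
      ?_ ?_ ?_ ?_ ?_ ?_ ?_ ?_ ?_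
    · show (0 : ZMod q) = _ + _; ring
    · show y2 = _ + _; rw [hy2]; ring
    · show y2 = _ + _; ring
    · show y3 = _ + _; rw [hy3, hy2]; ring
    · show y3 = _ + _; ring
    · show y4 = _ + _; rw [hy4, hy3, hy2]; ring
    · show y4 = _ + _; ring
    · show (0 : ZMod q) = _ + _; rw [hy4, hy3, hy2]; linear_combination -heq
    · simp [List.nodup_cons, hj12, hj23, hj34, hj14, hi12, hi23, hi34, hi14,
        hj12.symm, hj23.symm, hj34.symm, hj14.symm, hi12.symm, hi23.symm, hi34.symm, hi14.symm,
        hv13, hv24, hw13, hw24, hv13.symm, hv24.symm, hw13.symm, hw24.symm, Subtype.ext_iff,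
        Prod.ext_iff]
  exact absurd (le_trans hg h8) (by norm_num)


def colMap (q r : ℕ) (a : Fin r → ZMod q) (S : Finset (ZMod q)) (j0 : {j // j ∈ S}) :
    (Unit ⊕ ((Fin r × {j : {x // x ∈ S} // j ≠ j0}) ⊕
      (Σ p : Fin r × {j : {x // x ∈ S} // j ≠ j0},
        {i : Fin r // i ≠ p.1} × {j : {x // x ∈ S} // j ≠ p.2.1}))) →
      ({x // x ∈ S} × ZMod q)
  | Sum.inl _ => (j0, 0)
  | Sum.inr (Sum.inl (i1, j1)) => (j1.1, a i1 * ((j1.1 : ZMod q) - (j0.1 : ZMod q)))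
  | Sum.inr (Sum.inr ⟨p, (i2, j2)⟩) =>
      (j2.1, a p.1 * ((p.2.1 : ZMod q) - (j0.1 : ZMod q))
        + a i2.1 * ((j2.1 : ZMod q) - (p.2.1 : ZMod q)))

lemma inj_step {q r : ℕ} [Fact q.Prime] {a : Fin r → ZMod q} (ha : Function.Injective a)
    {i i' : Fin r} {u : ZMod q} (hu : u ≠ 0) (h : a i * u = a i' * u) : i = i' :=
  ha (mul_right_cancel₀ hu h)

lemma sub_ne {q : ℕ} {S : Finset (ZMod q)} {j j' : {j // j ∈ S}} (h : j ≠ j') :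
    (j : ZMod q) - (j' : ZMod q) ≠ 0 :=
  sub_ne_zero_of_ne (fun hh => h (Subtype.ext hh))

lemma colMap_inj {q r : ℕ} [Fact q.Prime] {a : Fin r → ZMod q}
    (ha : Function.Injective a) {S : Finset (ZMod q)} (j0 : {j // j ∈ S})
    (hg : 10 ≤ (tannerGraph q r a S).egirth) :
    Function.Injective (colMap q r a S j0) := by
  -- tier-0 vs tier-2 contradiction
  have aux02 : ∀ (p : Fin r × {j : {x // x ∈ S} // j ≠ j0})
      (i2 : {i : Fin r // i ≠ p.1}) (j2 : {j : {x // x ∈ S} // j ≠ p.2.1}),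
      j0 = j2.1 →
      (0 : ZMod q) = a p.1 * ((p.2.1 : ZMod q) - (j0.1 : ZMod q))
        + a i2.1 * ((j2.1 : ZMod q) - (p.2.1 : ZMod q)) → False := by
    intro p i2 j2 hj hy
    have hc : (j2.1 : ZMod q) = (j0 : ZMod q) := congrArg Subtype.val hj.symm
    rw [hc] at hy
    have key : a p.1 * ((p.2.1 : ZMod q) - (j0 : ZMod q))
        = a i2.1 * ((p.2.1 : ZMod q) - (j0 : ZMod q)) := by linear_combination -hy
    exact i2.2 (inj_step ha (sub_ne p.2.2) key).symm
  -- tier-1 vs tier-2 contradiction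
  have aux12 : ∀ (i1' : Fin r) (j1' : {j : {x // x ∈ S} // j ≠ j0})
      (p : Fin r × {j : {x // x ∈ S} // j ≠ j0})
      (i2 : {i : Fin r // i ≠ p.1}) (j2 : {j : {x // x ∈ S} // j ≠ p.2.1}),
      j1'.1 = j2.1 →
      a i1' * ((j1'.1 : ZMod q) - (j0.1 : ZMod q)) =
        a p.1 * ((p.2.1 : ZMod q) - (j0.1 : ZMod q))
        + a i2.1 * ((j2.1 : ZMod q) - (p.2.1 : ZMod q)) → False := by
    intro i1' j1' p i2 j2 hj hy
    have hc : (j2.1 : ZMod q) = (j1'.1 : ZMod q) := congrArg Subtype.val hj.symm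
    rw [hc] at hy
    have hne : j1'.1 ≠ p.2.1 := fun h => j2.2 (hj ▸ h)
    by_cases hA : p.1 = i1'
    · have key : a p.1 * ((j1'.1 : ZMod q) - (p.2.1 : ZMod q))
          = a i2.1 * ((j1'.1 : ZMod q) - (p.2.1 : ZMod q)) := by
        rw [← hA] at hy; linear_combination hy
      exact i2.2 (inj_step ha (sub_ne hne) key).symm
    · by_cases hB : i2.1 = i1'
      · have key : a p.1 * ((p.2.1 : ZMod q) - (j0.1 : ZMod q))
            = a i2.1 * ((p.2.1 : ZMod q) - (j0.1 : ZMod q)) := by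
          rw [← hB] at hy; linear_combination -hy
        exact i2.2 (inj_step ha (sub_ne p.2.2) key).symm
      · exact no_six hg (i1 := p.1) (i2 := i2.1) (i3 := i1')
          (fun h => i2.2 h.symm) hB hA
          (j1 := j0) (j2 := p.2.1) (j3 := j1'.1)
          (fun h => p.2.2 h.symm) (fun h => hne h.symm) (fun h => j1'.2 h.symm)
          (by linear_combination -hy)
  intro u v huv
  match u, v with
  | Sum.inl (), Sum.inl () => rfl
  | Sum.inl (), Sum.inr (Sum.inl (i1, j1)) =>
      exact absurd (congrArg Prod.fst huv : j0 = j1.1).symm j1.2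
  | Sum.inr (Sum.inl (i1, j1)), Sum.inl () =>
      exact absurd (congrArg Prod.fst huv : j1.1 = j0) j1.2
  | Sum.inl (), Sum.inr (Sum.inr ⟨p, (i2, j2)⟩) =>
      exact absurd (congrArg Prod.snd huv) (fun h => aux02 p i2 j2 (congrArg Prod.fst huv) h)
  | Sum.inr (Sum.inr ⟨p, (i2, j2)⟩), Sum.inl () =>
      exact absurd (congrArg Prod.snd huv).symm
        (fun h => aux02 p i2 j2 (congrArg Prod.fst huv).symm h)
  | Sum.inr (Sum.inl (i1, j1)), Sum.inr (Sum.inl (i1', j1')) =>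
      have hj : j1.1 = j1'.1 := congrArg Prod.fst huv
      have hy : a i1 * ((j1.1 : ZMod q) - (j0.1 : ZMod q))
          = a i1' * ((j1'.1 : ZMod q) - (j0.1 : ZMod q)) := congrArg Prod.snd huv
      obtain rfl : j1 = j1' := Subtype.ext hj
      obtain rfl : i1 = i1' := inj_step ha (sub_ne j1.2) hy
      rfl
  | Sum.inr (Sum.inl (i1', j1')), Sum.inr (Sum.inr ⟨p, (i2, j2)⟩) =>
      exact absurd (congrArg Prod.snd huv)
        (fun h => aux12 i1' j1' p i2 j2 (congrArg Prod.fst huv) h)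
  | Sum.inr (Sum.inr ⟨p, (i2, j2)⟩), Sum.inr (Sum.inl (i1', j1')) =>
      exact absurd (congrArg Prod.snd huv).symm
        (fun h => aux12 i1' j1' p i2 j2 (congrArg Prod.fst huv).symm h)
  | Sum.inr (Sum.inr ⟨p, (⟨I2, hI2⟩, ⟨J2, hJ2⟩)⟩),
    Sum.inr (Sum.inr ⟨p', (⟨I2', hI2'⟩, ⟨J2', hJ2'⟩)⟩) =>
      have hj : J2 = J2' := congrArg Prod.fst huv
      have hy : a p.1 * ((p.2.1 : ZMod q) - (j0.1 : ZMod q))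
          + a I2 * ((J2 : ZMod q) - (p.2.1 : ZMod q))
          = a p'.1 * ((p'.2.1 : ZMod q) - (j0.1 : ZMod q))
          + a I2' * ((J2' : ZMod q) - (p'.2.1 : ZMod q)) := congrArg Prod.snd huv
      have hcj : (J2 : ZMod q) = (J2' : ZMod q) := congrArg Subtype.val hj
      rw [← hcj] at hy
      by_cases hA : p.1 = p'.1
      · by_cases hB : p.2 = p'.2
        · have hcB : (p.2.1 : ZMod q) = (p'.2.1 : ZMod q) := by rw [hB]
          have key : a I2 * ((J2 : ZMod q) - (p.2.1 : ZMod q))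
              = a I2' * ((J2 : ZMod q) - (p.2.1 : ZMod q)) := by
            rw [← hA, ← hcB] at hy; linear_combination hy
          have hI : I2 = I2' := inj_step ha (sub_ne hJ2) key
          obtain hpp : p = p' := Prod.ext hA hB
          subst hpp
          obtain rfl : I2 = I2' := hI
          obtain rfl : J2 = J2' := hj
          rfl
        · exfalso
          have hBne : p.2.1 ≠ p'.2.1 := fun h => hB (Subtype.ext h)
          by_cases hC : I2 = I2'
          · have key : a p.1 * ((p.2.1 : ZMod q) - (p'.2.1 : ZMod q))
                = a I2 * ((p.2.1 : ZMod q) - (p'.2.1 : ZMod q)) := by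
              rw [← hA, ← hC] at hy; linear_combination hy
            exact absurd (inj_step ha (sub_ne hBne) key).symm hI2
          · refine no_six hg (i1 := I2) (i2 := I2') (i3 := p.1) hC
              (fun h => hI2' (h.trans hA)) hI2
              (j1 := p.2.1) (j2 := J2) (j3 := p'.2.1)
              (fun h => hJ2 h.symm) (fun h => hJ2' (hj.symm.trans h)) hBne ?_
            rw [← hA] at hy; linear_combination hy
      · by_cases hC : I2 = I2'
        · by_cases hB : p.2.1 = p'.2.1
          · exfalso
            have hcB : (p.2.1 : ZMod q) = (p'.2.1 : ZMod q) := congrArg Subtype.val hB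
            have key : a p.1 * ((p.2.1 : ZMod q) - (j0.1 : ZMod q))
                = a p'.1 * ((p.2.1 : ZMod q) - (j0.1 : ZMod q)) := by
              rw [← hcB, ← hC] at hy; linear_combination hy
            exact hA (inj_step ha (sub_ne p.2.2) key)
          · exfalso
            refine no_six hg (i1 := p.1) (i2 := I2) (i3 := p'.1)
              (fun h => hI2 h.symm) (fun h => hI2' (hC.symm.trans h)) hA
              (j1 := j0) (j2 := p.2.1) (j3 := p'.2.1)
              (fun h => p.2.2 h.symm) hB (fun h => p'.2.2 h.symm) ?_
            rw [← hC] at hy; linear_combination hy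
        · exfalso
          refine no_eight hg (i1 := p.1) (i2 := I2) (i3 := I2') (i4 := p'.1)
            (fun h => hI2 h.symm) hC hI2' hA
            (j1 := j0) (j2 := p.2.1) (j3 := J2) (j4 := p'.2.1)
            (fun h => p.2.2 h.symm) (fun h => hJ2 h.symm)
            (fun h => hJ2' (hj.symm.trans h)) (fun h => p'.2.2 h.symm)
            ?_ ?_ ?_ ?_ ?_
          · intro h h0
            exact aux02 p ⟨I2, hI2⟩ ⟨J2, hJ2⟩ h h0
          · intro h he
            have hcB : (p.2.1 : ZMod q) = (p'.2.1 : ZMod q) := congrArg Subtype.val h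
            have key : a p.1 * ((p.2.1 : ZMod q) - (j0.1 : ZMod q))
                = a p'.1 * ((p.2.1 : ZMod q) - (j0.1 : ZMod q)) := by
              rw [← hcB] at hy he; linear_combination hy + he
            exact hA (inj_step ha (sub_ne p.2.2) key)
          · intro h hx
            rw [← h] at hx
            have key : a I2 * ((J2 : ZMod q) - (p.2.1 : ZMod q))
                = a p.1 * ((J2 : ZMod q) - (p.2.1 : ZMod q)) := by
              linear_combination -hx
            exact hI2 (inj_step ha (sub_ne hJ2) key)
          · intro h hx
            rw [← h] at hx
            have key : a I2 * ((p'.2.1 : ZMod q) - (J2 : ZMod q))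
                = a I2' * ((p'.2.1 : ZMod q) - (J2 : ZMod q)) := by
              linear_combination hx
            exact hC (inj_step ha (sub_ne (fun hh => hJ2' (hj.symm.trans hh.symm))) key)
          · linear_combination hy


lemma card_ne' {α : Type*} [Fintype α] [DecidableEq α] (a : α) :
    Fintype.card {x : α // x ≠ a} = Fintype.card α - 1 := by
  have h := Fintype.card_subtype_compl (fun x : α => x = a)
  simpa [Fintype.card_subtype_eq] using h

lemma tanner_count (q r : ℕ) (hq : q.Prime) (a : Fin r → ZMod q)
    (ha : Function.Injective a) (S : Finset (ZMod q)) (hS : 1 ≤ S.card)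
    (hg : 10 ≤ (tannerGraph q r a S).egirth) :
    1 + (r * (S.card - 1) + (r * (S.card - 1)) * ((r - 1) * (S.card - 1))) ≤ S.card * q := by
  classical
  haveI : Fact q.Prime := ⟨hq⟩
  haveI : NeZero q := ⟨hq.ne_zero⟩
  obtain ⟨j0v, hj0⟩ := Finset.card_pos.mp hS
  set j0 : {j // j ∈ S} := ⟨j0v, hj0⟩
  have hinj := colMap_inj (a := a) (r := r) ha j0 hg
  have hle := Fintype.card_le_of_injective _ hinj
  have hdom : Fintype.card (Unit ⊕ ((Fin r × {j : {x // x ∈ S} // j ≠ j0}) ⊕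
      (Σ p : Fin r × {j : {x // x ∈ S} // j ≠ j0},
        {i : Fin r // i ≠ p.1} × {j : {x // x ∈ S} // j ≠ p.2.1})))
      = 1 + (r * (S.card - 1) + (r * (S.card - 1)) * ((r - 1) * (S.card - 1))) := by
    simp [Fintype.card_sum, Fintype.card_prod, Fintype.card_sigma, card_ne',
      Fintype.card_coe, Finset.sum_const, mul_comm]
  have hcod : Fintype.card ({x // x ∈ S} × ZMod q) = S.card * q := by
    simp [Fintype.card_prod, Fintype.card_coe, ZMod.card]
  rw [hdom, hcod] at hle
  exact hle


/-- Every shortened array code with modulus `q` (an odd prime),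
column-weight `r ≥ 2` (distinct block-row labels), girth at least ten and
`s ≥ 1` retained block-columns satisfies
`s ≤ (q + r(2r-3) + √((q + r(2r-3))² - 4r(r-1)³)) / (2r(r-1))`. -/
theorem arrayCode_girth_ten_moore_bound (q r : ℕ) (hq : q.Prime) (hqodd : Odd q)
    (hr : 2 ≤ r) (a : Fin r → ZMod q) (ha : Function.Injective a)
    (S : Finset (ZMod q)) (hS : 1 ≤ S.card)
    (hgirth : 10 ≤ (tannerGraph q r a S).egirth) :
    (S.card : ℝ) ≤
      ((q : ℝ) + r * (2 * r - 3) +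
        Real.sqrt (((q : ℝ) + r * (2 * r - 3)) ^ 2 - 4 * r * ((r : ℝ) - 1) ^ 3)) /
      (2 * r * ((r : ℝ) - 1)) := by
  have key := tanner_count q r hq a ha S hS hgirth
  have hr1 : 1 ≤ r := le_trans (by norm_num) hr
  -- cast to the reals
  set s : ℝ := (S.card : ℝ) with hs
  set rr : ℝ := (r : ℝ) with hrr
  set Q : ℝ := (q : ℝ) with hQ
  have hrr2 : (2 : ℝ) ≤ rr := by rw [hrr]; exact_mod_cast hr
  have hs1 : (1 : ℝ) ≤ s := by rw [hs]; exact_mod_cast hS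
  have key' : 1 + (rr * (s - 1) + (rr * (s - 1)) * ((rr - 1) * (s - 1))) ≤ s * Q := by
    have c1 : ((S.card - 1 : ℕ) : ℝ) = s - 1 := by
      rw [Nat.cast_sub hS]; norm_num [hs]
    have c2 : ((r - 1 : ℕ) : ℝ) = rr - 1 := by
      rw [Nat.cast_sub hr1]; norm_num [hrr]
    calc 1 + (rr * (s - 1) + (rr * (s - 1)) * ((rr - 1) * (s - 1)))
        = ((1 + (r * (S.card - 1) + (r * (S.card - 1)) * ((r - 1) * (S.card - 1))) : ℕ) : ℝ) := by
          push_cast [c1, c2]; ring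
      _ ≤ ((S.card * q : ℕ) : ℝ) := by exact_mod_cast key
      _ = s * Q := by push_cast; ring
  set A : ℝ := rr * (rr - 1) with hA
  set B : ℝ := Q + rr * (2 * rr - 3) with hB
  have hApos : 0 < A := by rw [hA]; nlinarith
  have quad : A * s ^ 2 - B * s + (rr - 1) ^ 2 ≤ 0 := by
    have hid : A * s ^ 2 - B * s + (rr - 1) ^ 2
        = (1 + (rr * (s - 1) + (rr * (s - 1)) * ((rr - 1) * (s - 1)))) - s * Q := by
      rw [hA, hB]; ring
    rw [hid]; linarith
  have h4 : 4 * A * (A * s ^ 2 - B * s + (rr - 1) ^ 2) ≤ 0 :=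
    mul_nonpos_of_nonneg_of_nonpos (by positivity) quad
  have disc : (2 * A * s - B) ^ 2 ≤ B ^ 2 - 4 * A * (rr - 1) ^ 2 := by
    have hid : (2 * A * s - B) ^ 2
        = (B ^ 2 - 4 * A * (rr - 1) ^ 2) + 4 * A * (A * s ^ 2 - B * s + (rr - 1) ^ 2) := by ring
    rw [hid]; linarith
  have harg : B ^ 2 - 4 * rr * (rr - 1) ^ 3 = B ^ 2 - 4 * A * (rr - 1) ^ 2 := by
    rw [hA]; ring
  have hsq : 2 * A * s - B ≤ Real.sqrt (B ^ 2 - 4 * rr * (rr - 1) ^ 3) := by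
    rw [harg]
    refine le_trans (le_abs_self _) ?_
    rw [← Real.sqrt_sq_eq_abs]
    exact Real.sqrt_le_sqrt disc
  rw [le_div_iff₀ (by nlinarith : (0 : ℝ) < 2 * rr * (rr - 1))]
  have h2A : 2 * rr * (rr - 1) = 2 * A := by rw [hA]; ring
  rw [h2A]
  linarith
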